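/- With p_i = 2·4^{−i}·(2i−2)!/((i−1)!·(i+1)!) for integers i ≥ 1, the series ∑_{i=1}^{∞} i·p_i converges and equals 2/3. Consequently the integer-valued random variable ξ with distribution P(ξ = 1) = 2/3, P(ξ = 0) = 1/6, and P(ξ = −i) = p_i/2 for each integer i ≥ 1 has expectation 𝔼ξ = 1/3. -/

import Mathlib

open MeasureTheory

/-- The peeling probabilities `p_i = 2 · 4⁻ⁱ · (2i−2)! / ((i−1)!·(i+1)!)` of the
half-plane UIPT, for `i ≥ 1`. -/
noncomputable def peelProb (i : ℕ) : ℝ :=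
  2 * (4 : ℝ)⁻¹ ^ i * (Nat.factorial (2 * i - 2)) /
    ((Nat.factorial (i - 1)) * (Nat.factorial (i + 1)))

open Filter

noncomputable def aseq (n : ℕ) : ℝ := (Nat.centralBinom n : ℝ) / 4 ^ n

lemma aseq_pos (n : ℕ) : 0 < aseq n :=
  div_pos (by exact_mod_cast n.centralBinom_pos) (by positivity)

lemma aseq_zero : aseq 0 = 1 := by simp [aseq, Nat.centralBinom]

lemma aseq_succ (n : ℕ) : aseq (n + 1) = aseq n * (2 * n + 1) / (2 * n + 2) := by
  have h' : ((n : ℝ) + 1) * (Nat.centralBinom (n + 1) : ℝ)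
      = 2 * (2 * n + 1) * Nat.centralBinom n := by
    exact_mod_cast Nat.succ_mul_centralBinom_succ n
  have hn : ((n : ℝ) + 1) ≠ 0 := by positivity
  have hcb : (Nat.centralBinom (n + 1) : ℝ)
      = 2 * (2 * n + 1) * Nat.centralBinom n / (n + 1) := by
    field_simp; linarith [h']
  rw [aseq, aseq, pow_succ, hcb]
  field_simp
  ring

lemma aseq_sq_le (n : ℕ) : aseq n ^ 2 ≤ 1 / (2 * n + 1) := by
  induction n with
  | zero => simp [aseq_zero]
  | succ n ih =>
    have h1 : (0:ℝ) < 2 * n + 1 := by positivity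
    have hsq : aseq n ^ 2 * (2 * n + 1) ≤ 1 := (le_div_iff₀ h1).mp ih
    rw [aseq_succ]
    push_cast
    rw [div_pow, div_le_div_iff₀ (by positivity) (by positivity)]
    nlinarith [mul_le_mul_of_nonneg_right hsq
      (by positivity : (0:ℝ) ≤ (2*n+1)*(2*((n:ℝ)+1)+1)), sq_nonneg (aseq n)]

lemma aseq_tendsto : Tendsto aseq atTop (nhds 0) := by
  have hub : ∀ n, aseq n ≤ Real.sqrt (1 / (2 * n + 1)) := by
    intro n
    have := aseq_sq_le n
    nlinarith [Real.sq_sqrt (by positivity : (0:ℝ) ≤ 1 / (2 * n + 1)),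
      Real.sqrt_nonneg (1 / (2 * (n:ℝ) + 1)), aseq_pos n]
  have h2 : Tendsto (fun n : ℕ => Real.sqrt (1 / (2 * n + 1))) atTop (nhds 0) := by
    have h0 : Tendsto (fun n : ℕ => 1 / (2 * (n:ℝ) + 1)) atTop (nhds 0) := by
      simp only [one_div]
      apply Tendsto.comp tendsto_inv_atTop_zero
      apply Filter.Tendsto.atTop_add _ tendsto_const_nhds
      exact (tendsto_natCast_atTop_atTop).const_mul_atTop (by norm_num)
    have := (Real.continuous_sqrt.tendsto 0).comp h0
    simpa [Function.comp_def] using this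
  exact tendsto_of_tendsto_of_tendsto_of_le_of_le tendsto_const_nhds h2
    (fun n => (aseq_pos n).le) hub

lemma peel_succ (i : ℕ) : peelProb (i + 1) = aseq i / (2 * (i + 1) * (i + 2)) := by
  have h2i : 2 * (i + 1) - 2 = 2 * i := by omega
  have h1i : i + 1 - 1 = i := rfl
  have hfac : ((2 * i).factorial : ℝ)
      = (Nat.centralBinom i : ℝ) * i.factorial * i.factorial := by
    have := Nat.choose_mul_factorial_mul_factorial (Nat.le_mul_of_pos_left i (by norm_num) : i ≤ 2 * i)
    rw [Nat.centralBinom]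
    have h2ii : 2 * i - i = i := by omega
    rw [h2ii] at this
    exact_mod_cast this.symm
  have hfac2 : (((i + 1) + 1).factorial : ℝ) = (i + 2) * (i + 1) * i.factorial := by
    rw [Nat.factorial_succ, Nat.factorial_succ]; push_cast; ring
  have hfpos : (0:ℝ) < i.factorial := by exact_mod_cast i.factorial_pos
  rw [peelProb, h2i, h1i, hfac, hfac2, aseq]
  have h4 : ((4:ℝ)⁻¹) ^ (i + 1) = 1 / (4 * 4 ^ i) := by
    rw [inv_pow, pow_succ]; ring
  rw [h4]
  have : (0:ℝ) < 4 ^ i := by positivity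
  field_simp
  ring

lemma peel_key (i : ℕ) :
    ((i + 1 : ℕ) : ℝ) * peelProb (i + 1) = aseq i / (2 * (i + 2)) := by
  rw [peel_succ]
  have h1 : ((i:ℝ) + 1) ≠ 0 := by positivity
  have h2 : ((i:ℝ) + 2) ≠ 0 := by positivity
  push_cast
  field_simp

noncomputable def gg (n : ℕ) : ℝ := aseq n + 2 * aseq (n + 1)

lemma gg_diff (i : ℕ) : aseq i / (2 * (i + 2)) = (gg i - gg (i + 1)) / 3 := by
  rw [gg, gg, aseq_succ (i+1), aseq_succ i]
  have h2 : ((i:ℝ) + 2) ≠ 0 := by positivity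
  push_cast
  have ha : (2*(i:ℝ)+2) ≠ 0 := by positivity
  have hb : (2*((i:ℝ)+1)+2) ≠ 0 := by positivity
  field_simp
  ring

lemma gg_tendsto : Tendsto gg atTop (nhds 0) := by
  have := aseq_tendsto.add (((aseq_tendsto.comp (tendsto_add_atTop_nat 1))).const_mul 2)
  simpa [show gg = fun n => aseq n + 2 * aseq (n + 1) from rfl, Function.comp_def] using this

lemma hasSum_first_moment :
    HasSum (fun i : ℕ => ((i + 1 : ℕ) : ℝ) * peelProb (i + 1)) (2 / 3) := by
  rw [hasSum_iff_tendsto_nat_of_nonneg]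
  · have heq : ∀ n : ℕ, ∑ i ∈ Finset.range n, ((i + 1 : ℕ) : ℝ) * peelProb (i + 1)
        = (gg 0 - gg n) / 3 := by
      intro n
      rw [← Finset.sum_range_sub' gg n, Finset.sum_div]
      exact Finset.sum_congr rfl fun i _ => by rw [peel_key, gg_diff]
    simp only [heq]
    have hg0 : gg 0 = 2 := by
      rw [gg, aseq_succ, aseq_zero]; norm_num
    rw [hg0]
    have := (tendsto_const_nhds (x := (2:ℝ)) (f := atTop)).sub gg_tendsto
    have := this.div_const 3
    simpa using this
  · intro i
    rw [peel_key]
    have := aseq_pos i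
    positivity
noncomputable def hh (n : ℕ) : ℝ := 2 / 3 * (aseq n - aseq (n + 1))

lemma hh_diff (i : ℕ) : peelProb (i + 1) = hh i - hh (i + 1) := by
  rw [peel_succ, hh, hh, aseq_succ (i+1), aseq_succ i]
  have h1 : ((i:ℝ) + 1) ≠ 0 := by positivity
  have h2 : ((i:ℝ) + 2) ≠ 0 := by positivity
  push_cast
  have ha : (2*(i:ℝ)+2) ≠ 0 := by positivity
  have hb : (2*((i:ℝ)+1)+2) ≠ 0 := by positivity
  field_simp
  ring

lemma hasSum_peel : HasSum (fun i : ℕ => peelProb (i + 1)) (1 / 3) := by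
  rw [hasSum_iff_tendsto_nat_of_nonneg]
  · have heq : ∀ n : ℕ, ∑ i ∈ Finset.range n, peelProb (i + 1) = hh 0 - hh n := by
      intro n
      rw [← Finset.sum_range_sub' hh n]
      exact Finset.sum_congr rfl fun i _ => hh_diff i
    simp only [heq]
    have hh0 : hh 0 = 1 / 3 := by
      rw [hh, aseq_succ, aseq_zero]; norm_num
    rw [hh0]
    have hht : Tendsto hh atTop (nhds 0) := by
      have := (aseq_tendsto.sub (aseq_tendsto.comp (tendsto_add_atTop_nat 1))).const_mul (2/3)
      simpa [show hh = fun n => 2 / 3 * (aseq n - aseq (n + 1)) from rfl, Function.comp_def] using this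
    simpa using (tendsto_const_nhds (x := (1/3:ℝ)) (f := atTop)).sub hht
  · intro i
    rw [peel_succ]
    have := aseq_pos i
    positivity

lemma peel_nonneg (i : ℕ) : 0 ≤ peelProb (i + 1) := by
  rw [peel_succ]
  have := aseq_pos i
  positivity

/-- `∑_{i ≥ 1} i·p_i = 2/3`; consequently any integer-valued random variable `ξ` with
`P(ξ = 1) = 2/3`, `P(ξ = 0) = 1/6` and `P(ξ = −i) = p_i/2` for `i ≥ 1` is integrable
with expectation `1/3`. -/
theorem peelProb_first_moment :
    HasSum (fun i : ℕ => ((i + 1 : ℕ) : ℝ) * peelProb (i + 1)) (2 / 3) ∧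
    ∀ (Ω : Type) (_ : MeasurableSpace Ω) (μ : Measure Ω), IsProbabilityMeasure μ →
      ∀ (ξ : Ω → ℤ), Measurable ξ →
        μ {ω : Ω | ξ ω = 1} = ENNReal.ofReal (2 / 3) →
        μ {ω : Ω | ξ ω = 0} = ENNReal.ofReal (1 / 6) →
        (∀ i : ℕ, 1 ≤ i → μ {ω : Ω | ξ ω = -(i : ℤ)} = ENNReal.ofReal (peelProb i / 2)) →
        Integrable (fun ω => (ξ ω : ℝ)) μ ∧ ∫ ω, (ξ ω : ℝ) ∂μ = 1 / 3 := by
  refine ⟨hasSum_first_moment, ?_⟩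
  intro Ω mΩ μ hprob ξ hξ h1 h0 hneg
  set ν : Measure ℤ := μ.map ξ with hν
  have hνprob : IsProbabilityMeasure ν := Measure.isProbabilityMeasure_map hξ.aemeasurable
  have hν1 : ∀ z : ℤ, ν {z} = μ {ω | ξ ω = z} := by
    intro z
    rw [hν, Measure.map_apply hξ (measurableSet_singleton z)]
    rfl
  have ν1 : ν {(1:ℤ)} = ENNReal.ofReal (2/3) := by rw [hν1]; exact h1
  have ν0 : ν {(0:ℤ)} = ENNReal.ofReal (1/6) := by rw [hν1]; exact h0
  have νneg : ∀ n : ℕ, ν {(-(n+1) : ℤ)} = ENNReal.ofReal (peelProb (n+1) / 2) := by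
    intro n
    rw [hν1]
    have := hneg (n+1) (Nat.le_add_left 1 n)
    rw [← this]
    congr 1
  -- the negative half-line has measure 1/6
  have hsetneg : {z : ℤ | z < 0} = ⋃ n : ℕ, {(-(n+1) : ℤ)} := by
    ext z
    simp only [Set.mem_setOf_eq, Set.mem_iUnion, Set.mem_singleton_iff]
    constructor
    · intro h; exact ⟨(-z-1).toNat, by omega⟩
    · rintro ⟨n, rfl⟩; omega
  have hsum_half : Summable (fun n : ℕ => peelProb (n+1) / 2) :=
    (hasSum_peel.div_const 2).summable
  have νnegtotal : ν {z : ℤ | z < 0} = ENNReal.ofReal (1/6) := by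
    rw [hsetneg, measure_iUnion ?_ (fun n => measurableSet_singleton _)]
    · calc ∑' n : ℕ, ν {(-(n+1) : ℤ)}
          = ∑' n : ℕ, ENNReal.ofReal (peelProb (n+1) / 2) := by
            exact tsum_congr νneg
        _ = ENNReal.ofReal (∑' n : ℕ, (peelProb (n+1) / 2)) :=
            (ENNReal.ofReal_tsum_of_nonneg (fun n => by
              have := peel_nonneg n; linarith) hsum_half).symm
        _ = ENNReal.ofReal (1/6) := by
            rw [(hasSum_peel.div_const 2).tsum_eq]; norm_num
    · intro m n hmn
      simp only [Function.onFun, Set.disjoint_singleton]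
      omega
  -- positive integers ≥ 2 are null
  have νpos : ∀ n : ℕ, 2 ≤ n → ν {(n:ℤ)} = 0 := by
    intro n hn
    set S : Set ℤ := {z : ℤ | z < 0} ∪ {0, 1} with hS
    have hSmeas : MeasurableSet S := .of_discrete
    have hνS : ν S = 1 := by
      rw [hS, measure_union ?_ (by exact .of_discrete)]
      · rw [νnegtotal]
        have : ν ({0, 1} : Set ℤ) = ν {(0:ℤ)} + ν {(1:ℤ)} := by
          rw [Set.insert_eq, measure_union (by simp) (by exact .of_discrete)]
        rw [this, ν0, ν1, ← ENNReal.ofReal_add (by norm_num) (by norm_num),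
          ← ENNReal.ofReal_add (by norm_num) (by norm_num)]
        norm_num
      · rw [Set.disjoint_iff]
        rintro z ⟨hz1, hz2⟩
        simp only [Set.mem_insert_iff, Set.mem_singleton_iff] at hz2
        simp only [Set.mem_setOf_eq] at hz1
        omega
    have hcompl : ν Sᶜ = 0 := by
      rw [measure_compl hSmeas (by simp [hνS]), hνS, measure_univ, tsub_self]
    apply measure_mono_null _ hcompl
    intro z hz
    simp only [Set.mem_singleton_iff] at hz
    subst hz
    simp only [hS, Set.mem_compl_iff, Set.mem_union, Set.mem_setOf_eq,
      Set.mem_insert_iff, Set.mem_singleton_iff]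
    push_neg
    refine ⟨by omega, by omega, by omega⟩
  -- integrability
  have hmeasR : Measurable (fun z : ℤ => (z : ℝ)) := measurable_of_countable _
  have hs2 : HasSum (fun n : ℕ => ((n+1:ℕ):ℝ) * peelProb (n+1) / 2) (1/3) := by
    have h := hasSum_first_moment.div_const 2
    norm_num at h
    convert h using 2 with n
    · rfl
    push_cast
    ring
  have νInt : Integrable (fun z : ℤ => (z : ℝ)) ν := by
    refine ⟨hmeasR.aestronglyMeasurable, ?_⟩
    rw [HasFiniteIntegral, lintegral_countable']
    have hsplit := tsum_of_nat_of_neg_add_one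
      (f := fun z : ℤ => (‖(z : ℝ)‖₊ : ENNReal) * ν {z})
      ENNReal.summable ENNReal.summable
    simp only [enorm_eq_nnnorm]
    rw [hsplit]
    have hposs : ∑' n : ℕ, (‖((n : ℤ) : ℝ)‖₊ : ENNReal) * ν {(n:ℤ)}
        = ENNReal.ofReal (2/3) := by
      rw [tsum_eq_single 1 ?_]
      · simp [ν1]
      · intro b hb
        match b, hb with
        | 0, _ => simp
        | 1, hb => exact absurd rfl hb
        | (n+2), _ => rw [νpos (n+2) (by omega)]; simp
    have hnegs : ∑' n : ℕ, (‖((-(n+1) : ℤ) : ℝ)‖₊ : ENNReal) * ν {(-(n+1):ℤ)}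
        = ENNReal.ofReal (1/3) := by
      have heach : ∀ n : ℕ, (‖((-(n+1) : ℤ) : ℝ)‖₊ : ENNReal) * ν {(-(n+1):ℤ)}
          = ENNReal.ofReal (((n+1:ℕ):ℝ) * peelProb (n+1) / 2) := by
        intro n
        rw [νneg n, ← enorm_eq_nnnorm, ← ofReal_norm,
          ← ENNReal.ofReal_mul (norm_nonneg _)]
        congr 1
        push_cast
        rw [Real.norm_eq_abs, abs_of_nonpos (by push_cast; linarith)]
        ring
      rw [tsum_congr heach,
        ← ENNReal.ofReal_tsum_of_nonneg (fun n => by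
          have h1 := peel_nonneg n
          positivity) hs2.summable, hs2.tsum_eq]
    rw [hposs, hnegs]
    exact ENNReal.add_lt_top.mpr ⟨ENNReal.ofReal_lt_top, ENNReal.ofReal_lt_top⟩
  have hIntμ : Integrable (fun ω => (ξ ω : ℝ)) μ := by
    have := (integrable_map_measure hmeasR.aestronglyMeasurable hξ.aemeasurable).mp νInt
    simpa [Function.comp_def] using this
  refine ⟨hIntμ, ?_⟩
  have hpos : HasSum (fun n : ℕ => (ν {((n:ℕ):ℤ)}).toReal • (((n:ℕ):ℤ):ℝ)) (2/3) := by
    have hz : ∀ b : ℕ, b ≠ 1 → (ν {((b:ℕ):ℤ)}).toReal • (((b:ℕ):ℤ):ℝ) = 0 := by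
      intro b hb
      match b, hb with
      | 0, _ => simp
      | 1, hb => exact absurd rfl hb
      | (n+2), _ => rw [νpos (n+2) (by omega)]; simp
    have := hasSum_single (f := fun n : ℕ => (ν {((n:ℕ):ℤ)}).toReal • (((n:ℕ):ℤ):ℝ)) 1 hz
    convert this using 1
    simp [ν1, ENNReal.toReal_ofReal]
    norm_num
  have hnegsum : HasSum (fun n : ℕ => (ν {(-(n+1):ℤ)}).toReal • ((-(n+1):ℤ):ℝ)) (-(1/3)) := by
    have h := hs2.neg
    convert h using 2 with n
    · rfl
    rw [νneg n, ENNReal.toReal_ofReal (by have := peel_nonneg n; positivity), smul_eq_mul]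
    push_cast
    ring
  have htotal : HasSum (fun z : ℤ => (ν {z}).toReal • (z:ℝ)) (2/3 + -(1/3)) :=
    HasSum.of_nat_of_neg_add_one hpos hnegsum
  have hint : ∫ z : ℤ, (z:ℝ) ∂ν = 1/3 := by
    rw [integral_countable' νInt]
    simp only [measureReal_def]
    rw [htotal.tsum_eq]
    norm_num
  rw [← integral_map hξ.aemeasurable hmeasR.aestronglyMeasurable] at *
  exact hint
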